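/- Let (N,τ) be a finite von Neumann algebra and φ a normal completely positive map on N with τ∘φ ≤ τ. Let φ* be the adjoint completely positive map, determined by τ(φ*(x)y) = τ(xφ(y)) for all x,y ∈ N. Then for every unitary u ∈ N: ‖φ*(u) − u‖₂² ≤ 2‖φ(u) − u‖₂. -/

import Mathlib

/- Common framework: a finite von Neumann algebra is encoded as a unital complex
`*`-algebra `A` together with a faithful (tracial) state `τ`.  Positivity of elements,
complete positivity of maps and the trace 2-norm are defined below. -/

open scoped ComplexOrder

/-- An element of a `*`-algebra is positive if it is of the form `y* y`. -/
def IsPosElem {A : Type*} [Ring A] [StarRing A] (x : A) : Prop := ∃ y : A, x = star y * y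

/-- A linear map is completely positive if all of its matrix amplifications
preserve positivity. -/
def IsCPMap {A : Type*} [Ring A] [StarRing A] [Algebra ℂ A] (φ : A →ₗ[ℂ] A) : Prop :=
  ∀ (n : ℕ) (x : Matrix (Fin n) (Fin n) A),
    (∃ y : Matrix (Fin n) (Fin n) A, x = star y * y) →
      ∃ y : Matrix (Fin n) (Fin n) A, x.map φ = star y * y

/-- A faithful tracial state on a `*`-algebra. -/
structure IsFaithfulTracialState {A : Type*} [Ring A] [StarRing A] [Algebra ℂ A]
    (τ : A →ₗ[ℂ] ℂ) : Prop where
  tracial : ∀ x y : A, τ (x * y) = τ (y * x)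
  pos : ∀ x : A, 0 ≤ τ (star x * x)
  faithful : ∀ x : A, τ (star x * x) = 0 → x = 0
  unital : τ 1 = 1

/-- The 2-norm `‖x‖₂ = τ(x* x)^{1/2}` associated to a trace. -/
noncomputable def trNorm2 {A : Type*} [Ring A] [StarRing A] [Algebra ℂ A]
    (τ : A →ₗ[ℂ] ℂ) (x : A) : ℝ := Real.sqrt (τ (star x * x)).re

lemma aux_starI {A : Type*} [Ring A] [StarRing A] [Algebra ℂ A]
    (τ : A →ₗ[ℂ] ℂ) (hτ : IsFaithfulTracialState τ) :
    star (algebraMap ℂ A Complex.I) = - algebraMap ℂ A Complex.I := by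
  set J : A := algebraMap ℂ A Complex.I with hJ
  have hJc : ∀ a : A, J * a = a * J := fun a => Algebra.commutes _ _
  have hJJ : J * J = (-1 : A) := by
    rw [hJ, ← map_mul, Complex.I_mul_I, map_neg, map_one]
  set s : A := star J with hs
  have hsc : ∀ a : A, s * a = a * s := by
    intro a
    have h := congrArg star (hJc (star a))
    simpa [star_mul] using h.symm
  have hss : s * s = (-1 : A) := by
    have h := congrArg star hJJ
    simpa [star_mul] using h
  have hq : star J * J = s * J := rfl
  have hq2 : (s * J) * (s * J) = 1 := by
    have : (s * J) * (s * J) = s * (J * s) * J := by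
      rw [mul_assoc, mul_assoc, mul_assoc]
    rw [this, ← hsc J, ← mul_assoc, mul_assoc (s*s) J J, hss, hJJ]
    simp
  have h1 : 0 ≤ τ (s * J) := by rw [← hq]; exact hτ.pos J
  have hqsa : star (s * J) = s * J := by
    rw [star_mul, hs, star_star]
  have h2 : 0 ≤ τ (star (1 - s * J) * (1 - s * J)) := hτ.pos _
  have e2 : star (1 - s * J) * (1 - s * J) = 1 - s * J + (1 - s * J) := by
    rw [star_sub, star_one, hqsa]
    have : (1 - s * J) * (1 - s * J) = 1 - s*J - s*J + (s*J)*(s*J) := by noncomm_ring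
    rw [this, hq2]; noncomm_ring
  rw [e2, map_add, map_sub, hτ.unital] at h2
  -- h3 : from (s+J)
  have hsJsa : star (s + J) = s + J := by rw [star_add, hs, star_star, add_comm]
  have h3 : 0 ≤ τ (star (s + J) * (s + J)) := hτ.pos _
  have e3 : star (s + J) * (s + J) = (s * J + s * J) - (1 + 1) := by
    rw [hsJsa]
    have : (s + J) * (s + J) = s*s + s*J + J*s + J*J := by noncomm_ring
    rw [this, hss, hJJ, ← hsc J]; noncomm_ring
  rw [e3, map_sub, map_add, map_add, hτ.unital] at h3
  have hre1 := (Complex.nonneg_iff.mp h1).1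
  have him1 := (Complex.nonneg_iff.mp h1).2
  have hre2 := (Complex.nonneg_iff.mp h2).1
  have hre3 := (Complex.nonneg_iff.mp h3).1
  have hτq : τ (s * J) = 1 := by
    apply Complex.ext
    · simp only [Complex.sub_re, Complex.add_re, Complex.one_re, Complex.zero_re] at hre2 hre3 ⊢
      linarith
    · simp [← him1]
  have h0 : τ (star (s + J) * (s + J)) = 0 := by
    rw [e3, map_sub, map_add, map_add, hτ.unital, hτq]; ring
  have := hτ.faithful _ h0
  have : s + J = 0 := this
  exact eq_neg_of_add_eq_zero_left this

lemma aux_herm {A : Type*} [Ring A] [StarRing A] [Algebra ℂ A]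
    (τ : A →ₗ[ℂ] ℂ) (hτ : IsFaithfulTracialState τ) (x y : A) :
    τ (star y * x) = (starRingEnd ℂ) (τ (star x * y)) := by
  have hsJ : star (algebraMap ℂ A Complex.I) = - algebraMap ℂ A Complex.I := aux_starI τ hτ
  have hIy : ∀ a : A, star (Complex.I • a) = (-Complex.I) • star a := by
    intro a
    rw [Algebra.smul_def, star_mul, hsJ, mul_neg, ← Algebra.commutes, ← Algebra.smul_def, ← neg_smul]
  have key : ∀ z : A, (τ (star z * z)).im = 0 := by
    intro z
    exact ((Complex.nonneg_iff.mp (hτ.pos z)).2).symm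
  have e1 : star (x + y) * (x + y)
      = star x * x + (star x * y + star y * x) + star y * y := by
    rw [star_add]; noncomm_ring
  have h1 : (τ (star x * x) + (τ (star x * y) + τ (star y * x)) + τ (star y * y)).im = 0 := by
    rw [← map_add, ← map_add, ← map_add, ← e1]; exact key _
  have e2 : star (x + Complex.I • y) * (x + Complex.I • y)
      = star x * x + (Complex.I • (star x * y) - Complex.I • (star y * x)) + star y * y := by
    rw [star_add, hIy]
    simp only [add_mul, mul_add, smul_add, smul_mul_assoc, mul_smul_comm, smul_smul]
    simp only [neg_mul, mul_neg, Complex.I_mul_I, neg_neg, one_smul, neg_smul]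
    abel
  have h2 : (τ (star x * x) + (Complex.I * τ (star x * y) - Complex.I * τ (star y * x)) + τ (star y * y)).im = 0 := by
    have := key (x + Complex.I • y)
    rw [e2] at this
    simpa [map_add, map_sub, map_smul, smul_eq_mul] using this
  have k1 := key x; have k2 := key y
  set p := τ (star x * y); set q := τ (star y * x)
  simp only [Complex.add_im, Complex.sub_im, Complex.mul_im, Complex.mul_re,
    Complex.I_re, Complex.I_im] at h1 h2
  apply Complex.ext
  · simp only [Complex.conj_re]; nlinarith [h2, k1, k2]
  · simp only [Complex.conj_im]; nlinarith [h1, k1, k2]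

lemma aux_start {A : Type*} [Ring A] [StarRing A] [Algebra ℂ A]
    (τ : A →ₗ[ℂ] ℂ) (hτ : IsFaithfulTracialState τ) (x : A) :
    τ (star x) = (starRingEnd ℂ) (τ x) := by
  have h := aux_herm τ hτ 1 x
  simpa using h

lemma aux_cp_entries {A : Type*} [Ring A] [StarRing A] [Algebra ℂ A]
    (φ : A →ₗ[ℂ] A) (hφ : IsCPMap φ) (v : A) :
    ∃ z : Matrix (Fin 2) (Fin 2) A,
      φ 1 = star (z 0 0) * z 0 0 + star (z 1 0) * z 1 0 ∧
      φ (star v) = star (z 0 0) * z 0 1 + star (z 1 0) * z 1 1 ∧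
      φ v = star (z 0 1) * z 0 0 + star (z 1 1) * z 1 0 ∧
      φ (v * star v) = star (z 0 1) * z 0 1 + star (z 1 1) * z 1 1 := by
  have hMY : (!![1, star v; v, v * star v] : Matrix (Fin 2) (Fin 2) A)
      = star !![(1:A), star v; 0, 0] * !![(1:A), star v; 0, 0] := by
    rw [Matrix.star_eq_conjTranspose]
    ext i j
    fin_cases i <;> fin_cases j <;>
      simp [Matrix.mul_apply, Fin.sum_univ_two]
  obtain ⟨z, hz⟩ := hφ 2 _ ⟨_, hMY⟩
  refine ⟨z, ?_, ?_, ?_, ?_⟩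
  · have h := congrFun (congrFun hz 0) 0
    simpa [Matrix.map_apply, Matrix.mul_apply, Fin.sum_univ_two, Matrix.star_apply] using h
  · have h := congrFun (congrFun hz 0) 1
    simpa [Matrix.map_apply, Matrix.mul_apply, Fin.sum_univ_two, Matrix.star_apply] using h
  · have h := congrFun (congrFun hz 1) 0
    simpa [Matrix.map_apply, Matrix.mul_apply, Fin.sum_univ_two, Matrix.star_apply] using h
  · have h := congrFun (congrFun hz 1) 1
    simpa [Matrix.map_apply, Matrix.mul_apply, Fin.sum_univ_two, Matrix.star_apply] using h

lemma aux_starphi {A : Type*} [Ring A] [StarRing A] [Algebra ℂ A]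
    (φ : A →ₗ[ℂ] A) (hφ : IsCPMap φ) (v : A) :
    φ (star v) = star (φ v) := by
  obtain ⟨z, -, h2, h3, -⟩ := aux_cp_entries φ hφ v
  rw [h2, h3, star_add, star_mul, star_mul, star_star, star_star]

lemma aux_cp2 {A : Type*} [Ring A] [StarRing A] [Algebra ℂ A]
    (τ : A →ₗ[ℂ] ℂ) (hτ : IsFaithfulTracialState τ)
    (φ : A →ₗ[ℂ] A) (hφ : IsCPMap φ) (v a b : A) :
    0 ≤ τ (star a * φ 1 * a + star a * φ (star v) * b
        + star b * φ v * a + star b * φ (v * star v) * b) := by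
  obtain ⟨z, h1, h2, h3, h4⟩ := aux_cp_entries φ hφ v
  have key : star a * φ 1 * a + star a * φ (star v) * b
        + star b * φ v * a + star b * φ (v * star v) * b
      = star (z 0 0 * a + z 0 1 * b) * (z 0 0 * a + z 0 1 * b)
        + star (z 1 0 * a + z 1 1 * b) * (z 1 0 * a + z 1 1 * b) := by
    rw [h1, h2, h3, h4]
    simp only [star_add, star_mul]
    noncomm_ring
  rw [key, map_add]
  exact add_nonneg (hτ.pos _) (hτ.pos _)

/-- let `φ` be a completely positive map on `(N,τ)` with `τ∘φ ≤ τ`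
and let `φ* = ψ` be its adjoint, determined by `τ(ψ(x) y) = τ(x φ(y))`.  Then for
every unitary `u`: `‖φ*(u) - u‖₂² ≤ 2 ‖φ(u) - u‖₂`. -/
theorem stmt5 {A : Type*} [Ring A] [StarRing A] [Algebra ℂ A]
    (τ : A →ₗ[ℂ] ℂ) (hτ : IsFaithfulTracialState τ)
    (φ ψ : A →ₗ[ℂ] A) (hφ : IsCPMap φ)
    (hsub : ∀ x : A, IsPosElem x → τ (φ x) ≤ τ x)
    (hadj : ∀ x y : A, τ (ψ x * y) = τ (x * φ y))
    (u : A) (hu : star u * u = 1 ∧ u * star u = 1) :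
    (trNorm2 τ (ψ u - u)) ^ 2 ≤ 2 * trNorm2 τ (φ u - u) := by
  obtain ⟨hu1, hu2⟩ := hu
  have tr := hτ.tracial
  set v : A := ψ u with hv
  set w : A := φ u - u with hw
  -- Step A : (τ (v * star v)).re ≤ 1
  set T2 : ℂ := τ (v * star v) with hT2
  have hT2pos : 0 ≤ T2 := by
    have := hτ.pos (star v); rwa [star_star] at this
  have hT2im : T2.im = 0 := ((Complex.nonneg_iff.mp hT2pos).2).symm
  have hT2conj : (starRingEnd ℂ) T2 = T2 := Complex.conj_eq_iff_im.mpr hT2im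
  have hvv : τ (u * φ (star v)) = T2 := (hadj u (star v)).symm
  have hS := aux_cp2 τ hτ φ hφ v (star u) (-1)
  have hElem : star (star u) * φ 1 * star u + star (star u) * φ (star v) * (-1)
      + star (-1:A) * φ v * star u + star (-1:A) * φ (v * star v) * (-1)
    = u * φ 1 * star u - u * φ (star v) - φ v * star u + φ (v * star v) := by
    simp only [star_star, star_neg, star_one, mul_neg, neg_mul, mul_one, one_mul, neg_neg]
    abel
  rw [hElem, map_add, map_sub, map_sub] at hS
  have hT3 : τ (φ v * star u) = T2 := by
    have e : φ v * star u = star (u * φ (star v)) := by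
      rw [star_mul, aux_starphi φ hφ v, star_star]
    rw [e, aux_start τ hτ, hvv, hT2conj]
  have hT1 : τ (u * φ 1 * star u) = τ (φ 1) := by
    rw [tr (u * φ 1) (star u), ← mul_assoc, hu1, one_mul]
  rw [hT1, hT3, hvv] at hS
  have hb1 : τ (φ 1) ≤ 1 := by
    have := hsub 1 ⟨1, by simp⟩
    rwa [hτ.unital] at this
  have hb2 : τ (φ (v * star v)) ≤ T2 := hsub _ ⟨star v, by rw [star_star]⟩
  have htle : T2.re ≤ 1 := by
    have h := (Complex.nonneg_iff.mp hS).1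
    have b1 := (Complex.le_def.mp hb1).1
    have b2 := (Complex.le_def.mp hb2).1
    simp only [Complex.sub_re, Complex.add_re, Complex.one_re] at h b1 b2 ⊢
    linarith
  -- Cauchy--Schwarz : normSq (τ (star u * w)) ≤ (τ (star w * w)).re
  set T : ℂ := τ (star u * w) with hT
  set Bww : ℂ := τ (star w * w) with hBww
  have hBpos : 0 ≤ Bww := hτ.pos w
  have hBim : Bww.im = 0 := ((Complex.nonneg_iff.mp hBpos).2).symm
  have hBconj : (starRingEnd ℂ) Bww = Bww := Complex.conj_eq_iff_im.mpr hBim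
  set z : A := w + (-T) • u with hz
  have hzu : τ (star u * z) = 0 := by
    rw [hz, mul_add, map_add, mul_smul_comm, map_smul, smul_eq_mul, hu1, hτ.unital, mul_one]
    ring
  have hzu' : τ (star z * u) = 0 := by
    rw [aux_herm τ hτ u z, hzu, map_zero]
  have hwu : τ (star w * u) = (starRingEnd ℂ) T := aux_herm τ hτ u w
  have hwz : τ (star w * z) = Bww - T * (starRingEnd ℂ) T := by
    rw [hz, mul_add, map_add, mul_smul_comm, map_smul, smul_eq_mul, hwu]
    ring
  have hzz : τ (star z * z) = Bww - (starRingEnd ℂ) T * T := by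
    have e1 : τ (star z * z) = τ (star z * w) := by
      rw [hz, mul_add, map_add, mul_smul_comm, map_smul, smul_eq_mul, hzu']
      ring
    rw [e1, aux_herm τ hτ w z, hwz, map_sub, hBconj, map_mul, Complex.conj_conj]
  have hCS : Complex.normSq T ≤ Bww.re := by
    have hp := hτ.pos z
    rw [hzz] at hp
    have h := (Complex.nonneg_iff.mp hp).1
    have e : ((starRingEnd ℂ) T * T).re = Complex.normSq T := by
      rw [mul_comm, Complex.mul_conj]
      simp
    simp only [Complex.sub_re] at h
    rw [e] at h
    linarith
  have hTre : -T.re ≤ trNorm2 τ w := by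
    have h1 : T.re ^ 2 ≤ Bww.re := by
      have : T.re ^ 2 ≤ Complex.normSq T := by
        rw [Complex.normSq_apply]; nlinarith [sq_nonneg T.im]
      linarith
    have h2 := Real.sqrt_le_sqrt h1
    rw [Real.sqrt_sq_eq_abs] at h2
    calc -T.re ≤ |T.re| := neg_le_abs _
      _ ≤ Real.sqrt Bww.re := h2
      _ = trNorm2 τ w := rfl
  -- expansion of the left-hand side
  have hD : τ (star (v - u) * (v - u))
      = τ (star v * v) - τ (star v * u) - τ (star u * v) + 1 := by
    have e : star (v - u) * (v - u)
        = star v * v - star v * u - star u * v + star u * u := by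
      rw [star_sub]; noncomm_ring
    rw [e, map_add, map_sub, map_sub, hu1, hτ.unital]
  have hvu : τ (star v * u) = (starRingEnd ℂ) (τ (star u * v)) := aux_herm τ hτ u v
  set C : ℂ := τ (star u * v) with hC
  have hvvre : (τ (star v * v)).re = T2.re := by rw [tr (star v) v]
  have hCre : C.re = T.re + 1 := by
    have e1 : C = (starRingEnd ℂ) (τ (star u * φ u)) := by
      rw [hC, tr (star u) v, hv, hadj u (star u), aux_starphi φ hφ u]
      have e2 : u * star (φ u) = star (φ u * star u) := by
        rw [star_mul, star_star]
      rw [e2, aux_start τ hτ, tr (φ u) (star u)]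
    have e3 : τ (star u * φ u) = T + 1 := by
      have e4 : star u * φ u = star u * w + star u * u := by
        rw [hw]; noncomm_ring
      rw [e4, map_add, hu1, hτ.unital, hT]
    rw [e1, e3]
    simp
  have hDre : (τ (star (v - u) * (v - u))).re = T2.re - 1 - 2 * T.re := by
    rw [hD, hvu]
    simp only [Complex.add_re, Complex.sub_re, Complex.one_re, Complex.conj_re]
    rw [hvvre]
    have := hCre
    linarith
  have hsq : (trNorm2 τ (v - u)) ^ 2 = (τ (star (v - u) * (v - u))).re := by
    rw [trNorm2, Real.sq_sqrt]
    exact (Complex.nonneg_iff.mp (hτ.pos _)).1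
  rw [hsq, hDre]
  have : trNorm2 τ (φ u - u) = trNorm2 τ w := by rw [hw]
  rw [this]
  linarith
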